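/- Let C ⊆ S²_B Λ²ℝⁿ (n ≥ 4) be a curvature cone whose maximal contained subspace V equals the trace-zero hyperplane S²₀ℝⁿ∧id ⊕ W. Then C equals the half-space {R ∈ S²_B Λ²ℝⁿ : tr R ≥ 0}. -/

import Mathlib

open Matrix

noncomputable section

/-- The ambient space of 4-tensors on ℝⁿ; a curvature operator R on Λ²ℝⁿ is recorded
by its components R i j k l = ⟨R(eᵢ∧eⱼ), eₖ∧eₗ⟩. -/
abbrev Tn (n : ℕ) : Type := Fin n → Fin n → Fin n → Fin n → ℝ

/-- The space S²_BΛ²ℝⁿ of algebraic curvature operators: symmetric endomorphisms of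
Λ²ℝⁿ (antisymmetry in the first and last pairs, symmetry in exchanging the pairs)
satisfying the first Bianchi identity. -/
def CurvOp (n : ℕ) : Submodule ℝ (Tn n) where
  carrier := {R | (∀ i j k l, R j i k l = -R i j k l) ∧
    (∀ i j k l, R i j l k = -R i j k l) ∧
    (∀ i j k l, R k l i j = R i j k l) ∧
    (∀ i j k l, R i j k l + R k i j l + R j k i l = 0)}
  add_mem' := by
    rintro a b ⟨ha1, ha2, ha3, ha4⟩ ⟨hb1, hb2, hb3, hb4⟩
    refine ⟨fun i j k l => ?_, fun i j k l => ?_, fun i j k l => ?_, fun i j k l => ?_⟩ <;>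
      simp only [Pi.add_apply]
    · linear_combination ha1 i j k l + hb1 i j k l
    · linear_combination ha2 i j k l + hb2 i j k l
    · linear_combination ha3 i j k l + hb3 i j k l
    · linear_combination ha4 i j k l + hb4 i j k l
  zero_mem' := ⟨fun _ _ _ _ => by simp, fun _ _ _ _ => by simp,
    fun _ _ _ _ => by simp, fun _ _ _ _ => by simp⟩
  smul_mem' := by
    rintro c a ⟨ha1, ha2, ha3, ha4⟩
    refine ⟨fun i j k l => ?_, fun i j k l => ?_, fun i j k l => ?_, fun i j k l => ?_⟩ <;>
      simp only [Pi.smul_apply, smul_eq_mul]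
    · linear_combination c * ha1 i j k l
    · linear_combination c * ha2 i j k l
    · linear_combination c * ha3 i j k l
    · linear_combination c * ha4 i j k l

/-- The action of g ∈ O(n) on curvature operators:
(g·R) i j k l = ⟨R(geᵢ∧geⱼ), geₖ∧geₗ⟩. -/
def act {n : ℕ} (g : Matrix (Fin n) (Fin n) ℝ) (R : Tn n) : Tn n :=
  fun i j k l => ∑ a, ∑ b, ∑ c, ∑ d, R a b c d * g a i * g b j * g c k * g d l

/-- The trace of a curvature operator (as an endomorphism of Λ²ℝⁿ); the scalar
curvature is twice this. -/
def trT {n : ℕ} (R : Tn n) : ℝ := (∑ i, ∑ j, R i j i j) / 2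

/-- The identity operator Id of Λ²ℝⁿ, as a 4-tensor. -/
def IdT (n : ℕ) : Tn n := fun i j k l =>
  (if i = k then (1 : ℝ) else 0) * (if j = l then 1 else 0)
    - (if i = l then (1 : ℝ) else 0) * (if j = k then 1 else 0)

/-- The Ricci tensor of a curvature operator. -/
def ricT {n : ℕ} (R : Tn n) (i k : Fin n) : ℝ := ∑ j, R i j k j

/-- The Weyl space W: curvature operators with vanishing Ricci tensor. -/
def WeylSet (n : ℕ) : Set (Tn n) :=
  {R | R ∈ CurvOp n ∧ ∀ i k, ricT R i k = 0}

/-- The tensor of A∧B, (A∧B)(x∧y) = (1/2)(Ax∧By + Bx∧Ay), for symmetric matrices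
A, B. -/
def wedgeT {n : ℕ} (A B : Matrix (Fin n) (Fin n) ℝ) : Tn n := fun i j k l =>
  (A k i * B l j - A l i * B k j + B k i * A l j - B l i * A k j) / 2

/-- The space S²₀ℝⁿ∧id of curvature operators A₀∧id with A₀ traceless symmetric
(equivalently: conformally flat scalar flat curvature operators). -/
def S20Set (n : ℕ) : Set (Tn n) :=
  {R | ∃ A : Matrix (Fin n) (Fin n) ℝ, Aᵀ = A ∧ A.trace = 0 ∧ R = wedgeT A 1}

/-- A curvature cone: a closed convex cone C ⊆ S²_BΛ²ℝⁿ, invariant under the action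
of O(n), with Id in its interior (interior relative to S²_BΛ²ℝⁿ). -/
def IsCurvCone (n : ℕ) (C : Set (Tn n)) : Prop :=
  C ⊆ (CurvOp n : Set (Tn n)) ∧ IsClosed C ∧ Convex ℝ C ∧
    (∀ x ∈ C, ∀ r : ℝ, 0 ≤ r → r • x ∈ C) ∧
    (∀ g : Matrix (Fin n) (Fin n) ℝ, g * gᵀ = 1 → gᵀ * g = 1 →
      ∀ R ∈ C, act g R ∈ C) ∧
    (∃ ε > (0 : ℝ), ∀ R ∈ CurvOp n, ‖R - IdT n‖ < ε → R ∈ C)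


lemma IdT_mem_curvOp (n : ℕ) : IdT n ∈ CurvOp n := by
  refine ⟨fun i j k l => ?_, fun i j k l => ?_, fun i j k l => ?_, fun i j k l => ?_⟩
  · simp only [IdT]; ring
  · simp only [IdT]; ring
  · simp only [IdT, eq_comm]; ring
  · simp only [IdT, eq_comm]; ring

lemma trT_add {n : ℕ} (a b : Tn n) : trT (a + b) = trT a + trT b := by
  simp [trT, Finset.sum_add_distrib]; ring

lemma trT_smul {n : ℕ} (c : ℝ) (a : Tn n) : trT (c • a) = c * trT a := by
  simp only [trT, Pi.smul_apply, smul_eq_mul, ← Finset.mul_sum]; ring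

lemma trT_IdT (n : ℕ) : trT (IdT n) = n * (n - 1) / 2 := by
  simp [trT, IdT, Finset.sum_sub_distrib, Finset.sum_ite_eq]; ring

/-- Let C ⊆ S²_BΛ²ℝⁿ (n ≥ 4) be a curvature cone whose maximal contained
vector subspace V equals the trace-zero hyperplane S²₀ℝⁿ∧id ⊕ W.  Then C equals the
half-space {R ∈ S²_BΛ²ℝⁿ : tr R ≥ 0}. -/
theorem stmt15 (n : ℕ) (hn : 4 ≤ n) (C : Set (Tn n)) (hC : IsCurvCone n C)
    (V : Submodule ℝ (Tn n)) (hVC : (V : Set (Tn n)) ⊆ C)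
    (hmax : ∀ W : Submodule ℝ (Tn n), (W : Set (Tn n)) ⊆ C → W ≤ V)
    (hV : (V : Set (Tn n)) = {R | R ∈ CurvOp n ∧ trT R = 0}) :
    C = {R | R ∈ CurvOp n ∧ 0 ≤ trT R} := by
  
  obtain ⟨hCsub, _hcl, hconv, hcone, _hinv, ε, hε, hball⟩ := hC
  have hIdCO : IdT n ∈ CurvOp n := IdT_mem_curvOp n
  have hIdC : IdT n ∈ C := by
    apply hball (IdT n) hIdCO; simpa using hε
  have htId : (0:ℝ) < trT (IdT n) := by
    rw [trT_IdT]
    have : (4:ℝ) ≤ n := by exact_mod_cast hn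
    nlinarith
  have hadd : ∀ x ∈ C, ∀ y ∈ C, x + y ∈ C := by
    intro x hx y hy
    have h2 : (1/2 : ℝ) • x + (1/2 : ℝ) • y ∈ C :=
      hconv hx hy (by norm_num) (by norm_num) (by norm_num)
    have := hcone _ h2 2 (by norm_num)
    have he : (2:ℝ) • ((1/2 : ℝ) • x + (1/2 : ℝ) • y) = x + y := by
      rw [smul_add, smul_smul, smul_smul]; norm_num
    rwa [he] at this
  have hVmem : ∀ S : Tn n, S ∈ CurvOp n → trT S = 0 → S ∈ C := by
    intro S h1 h2
    exact hVC (by rw [Set.ext_iff] at hV; exact (hV S).mpr ⟨h1, h2⟩)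
  ext R
  constructor
  · intro hR
    refine ⟨hCsub hR, ?_⟩
    by_contra h
    push_neg at h
    set c : ℝ := -trT R with hc
    have hcpos : 0 < c := by simp [hc]; linarith
    set R' : Tn n := c⁻¹ • R with hR'
    have hR'C : R' ∈ C := hcone R hR c⁻¹ (le_of_lt (inv_pos.mpr hcpos))
    have hR'tr : trT R' = -1 := by
      rw [hR', trT_smul]
      field_simp [hc]; linarith
    have hR'CO : R' ∈ CurvOp n := hCsub hR'C
    -- C contains all of CurvOp
    have hall : (CurvOp n : Set (Tn n)) ⊆ C := by
      intro S hS
      rcases le_or_gt 0 (trT S) with hτ | hτ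
      · -- S = (S - (trT S / trT Id) • Id) + (trT S / trT Id) • Id
        set t : ℝ := trT S / trT (IdT n) with ht
        have h0 : S - t • IdT n ∈ C := by
          apply hVmem
          · exact Submodule.sub_mem _ hS (Submodule.smul_mem _ _ hIdCO)
          · rw [sub_eq_add_neg, ← neg_smul, trT_add, trT_smul, ht]
            field_simp; ring
        have h1 : t • IdT n ∈ C := hcone _ hIdC t (div_nonneg hτ (le_of_lt htId))
        have := hadd _ h0 _ h1
        simpa using this
      · set t : ℝ := -trT S with ht
        have htpos : 0 < t := by simp [ht]; linarith
        have h0 : S - t • R' ∈ C := by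
          apply hVmem
          · exact Submodule.sub_mem _ hS (Submodule.smul_mem _ _ hR'CO)
          · rw [sub_eq_add_neg, ← neg_smul, trT_add, trT_smul, hR'tr, ht]; ring
        have h1 : t • R' ∈ C := hcone _ hR'C t (le_of_lt htpos)
        have := hadd _ h0 _ h1
        simpa using this
    have hle : CurvOp n ≤ V := hmax (CurvOp n) hall
    have : IdT n ∈ (V : Set (Tn n)) := hle hIdCO
    rw [hV] at this
    exact absurd this.2 (ne_of_gt htId)
  · rintro ⟨hRCO, hτ⟩
    set t : ℝ := trT R / trT (IdT n) with ht
    have h0 : R - t • IdT n ∈ C := by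
      apply hVmem
      · exact Submodule.sub_mem _ hRCO (Submodule.smul_mem _ _ hIdCO)
      · rw [sub_eq_add_neg, ← neg_smul, trT_add, trT_smul, ht]
        field_simp; ring
    have h1 : t • IdT n ∈ C := hcone _ hIdC t (div_nonneg hτ (le_of_lt htId))
    have := hadd _ h0 _ h1
    simpa using this
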